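/- Let F be a field of characteristic zero and let y₁, y₂, t ∈ F satisfy t³ = (y₁² − 1)(y₂² − 1), with y₁ ≠ 1, y₁ ≠ −1, y₂ ≠ −1 and t ≠ 0. Let u = t/(y₁² − 1), X = 2(y₂ + 1)/(y₁ − 1)², and Y = 4(u³(y₁ + 1)(y₁ − 1)² + y₂ + 1)/(y₁ − 1)³ be the elliptic parameter and Weierstrass coordinates of Fibration 3. Then the 2-neighbor elliptic parameter Y/(uX) satisfies Y/(uX) = 2(y₁ + y₂)/t; that is, it equals 2/u₄ where u₄ = t/(y₁ + y₂) is the elliptic parameter of Fibration 4. -/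

import Mathlib

/-- The 2-neighbor elliptic parameter `Y/(uX)` of Fibration 3 on the singular K3
surface `X₃` equals `2(y₁ + y₂)/t = 2/u₄`, where `u₄ = t/(y₁ + y₂)` is the
elliptic parameter of Fibration 4. -/
theorem two_neighbor_fibration3_to_fibration4 (F : Type*) [Field F] [CharZero F]
    (y₁ y₂ t u X Y u₄ : F)
    (ht : t ^ 3 = (y₁ ^ 2 - 1) * (y₂ ^ 2 - 1))
    (hy₁ : y₁ ≠ 1) (hy₁' : y₁ ≠ -1) (hy₂ : y₂ ≠ -1) (htne : t ≠ 0)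
    (hu : u = t / (y₁ ^ 2 - 1))
    (hX : X = 2 * (y₂ + 1) / (y₁ - 1) ^ 2)
    (hY : Y = 4 * (u ^ 3 * (y₁ + 1) * (y₁ - 1) ^ 2 + y₂ + 1) / (y₁ - 1) ^ 3)
    (hu₄ : u₄ = t / (y₁ + y₂)) :
    Y / (u * X) = 2 * (y₁ + y₂) / t ∧ Y / (u * X) = 2 / u₄ := by
  have h1 : y₁ - 1 ≠ 0 := sub_ne_zero.mpr hy₁
  have h2 : y₁ + 1 ≠ 0 := fun h => hy₁' (by linear_combination h)
  have h3 : y₂ + 1 ≠ 0 := fun h => hy₂ (by linear_combination h)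
  have hsq : y₁ ^ 2 - 1 ≠ 0 := by
    intro h
    rcases mul_eq_zero.mp (show (y₁ - 1) * (y₁ + 1) = 0 by linear_combination h) with h' | h'
    · exact h1 h'
    · exact h2 h'
  have hu3 : u ^ 3 = (y₂ ^ 2 - 1) / (y₁ ^ 2 - 1) ^ 2 := by
    rw [hu]; field_simp; linear_combination ht
  have hune : u ≠ 0 := by
    rw [hu]; exact div_ne_zero htne hsq
  have hY2 : Y = 4 * (y₂ + 1) * (y₁ + y₂) / ((y₁ + 1) * (y₁ - 1) ^ 3) := by
    rw [hY, hu3]; field_simp; ring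
  have main : Y / (u * X) = 2 * (y₁ + y₂) / t := by
    rw [hY2, hX, hu]
    field_simp
    ring
  refine ⟨main, main.trans ?_⟩
  by_cases hs : y₁ + y₂ = 0
  · simp [hs, hu₄]
  · rw [hu₄]; field_simp
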